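/- Let V be a real vector space, Δ ⊆ V a finite linearly independent subset, λ ∈ V, and X ⊆ λ − ℤ₊Δ a subset such that: (i) λ − α ∈ X for every α ∈ Δ; and (ii) for every μ ∈ X there exist N ≥ 0 and elements μ₀ = λ, μ₁, …, μ_N = μ of X with μ_{j−1} − μ_j ∈ Δ for all 1 ≤ j ≤ N. Suppose Y ⊆ X satisfies λ ∈ Y and Y is ({2},{1,2})-closed in X, i.e., whenever y₁ + y₂ = x₁ + x₂ with y₁, y₂ ∈ Y and x₁, x₂ ∈ X (repetitions allowed), one has x₁, x₂ ∈ Y. Then Y = X ∩ (λ − ℤ₊Δ'), where Δ' := {α ∈ Δ : λ − α ∈ Y}. -/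

import Mathlib

open Finsupp

/-- `R₊ := R ∩ [0,∞)`. -/
def Rplus (R : Set ℝ) : Set ℝ := R ∩ Set.Ici 0

/-- `ℓ(f) := Σ_v f(v)`. -/
noncomputable def ell {V : Type*} [AddCommGroup V] [Module ℝ V] (f : V →₀ ℝ) : ℝ :=
  f.sum fun _ r => r

/-- `ℓ⃗(f) := Σ_v f(v) • v`. -/
noncomputable def vell {V : Type*} [AddCommGroup V] [Module ℝ V] (f : V →₀ ℝ) : V :=
  f.sum fun v r => r • v

/-- `f ∈ Fin(X,R)`: finitely supported, support in `X`, values in `R ∪ {0}`. -/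
def IsFinSupp {V : Type*} [AddCommGroup V] [Module ℝ V] (X : Set V) (R : Set ℝ)
    (f : V →₀ ℝ) : Prop :=
  ↑f.support ⊆ X ∧ ∀ v, f v ∈ R ∪ {0}

/-- `Y` is a weak `R`-face of `X`. -/
def IsWeakFace {V : Type*} [AddCommGroup V] [Module ℝ V] (X Y : Set V) (R : Set ℝ) : Prop :=
  ∀ f g : V →₀ ℝ, IsFinSupp X (Rplus R) f → IsFinSupp Y (Rplus R) g →
    ell f = ell g → 0 < ell g → vell f = vell g → ↑f.support ⊆ Y

/-- `Y` is a positive weak `R`-face of `X`. -/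
def IsPosWeakFace {V : Type*} [AddCommGroup V] [Module ℝ V] (X Y : Set V) (R : Set ℝ) : Prop :=
  ∀ f g : V →₀ ℝ, IsFinSupp X (Rplus R) f → IsFinSupp Y (Rplus R) g →
    vell f = vell g → ell g ≤ ell f ∧ (ell g = ell f ↔ ↑f.support ⊆ Y)

/-- `Y` is `(R',R)`-closed in `X`. -/
def IsRClosed {V : Type*} [AddCommGroup V] [Module ℝ V] (X Y : Set V) (R' R : Set ℝ) : Prop :=
  ∀ f g : V →₀ ℝ, IsFinSupp X R f → IsFinSupp Y R g →
    ell f = ell g → ell f ∈ R' → ell f ≠ 0 → vell f = vell g → ↑f.support ⊆ Y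

/-- The maximizer set `X(φ)`. -/
def maximizer {V : Type*} [AddCommGroup V] [Module ℝ V] (X : Set V) (φ : V →ₗ[ℝ] ℝ) : Set V :=
  {x | x ∈ X ∧ ∀ x' ∈ X, φ x' ≤ φ x}


private lemma telescope {V : Type*} [AddCommGroup V] :
    ∀ (N : ℕ) (c : Fin (N + 1) → V),
      ∑ j : Fin N, (c j.castSucc - c j.succ) = c 0 - c (Fin.last N) := by
  intro N
  induction N with
  | zero => simp
  | succ n ih =>
    intro c
    rw [Fin.sum_univ_castSucc]
    have h := ih (fun i => c i.castSucc)
    have : ∀ j : Fin n, (c j.castSucc.castSucc - c j.castSucc.succ)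
        = (c j.castSucc.castSucc - c j.succ.castSucc) := by
      intro j; rw [Fin.succ_castSucc]
    rw [Finset.sum_congr rfl (fun j _ => this j), h]
    have h0 : (0 : Fin (n+1)).castSucc = 0 := rfl
    have hl : (Fin.last n).succ = Fin.last (n+1) := rfl
    rw [h0, hl]
    abel

private lemma counts_eq {V : Type*} [AddCommGroup V] [Module ℝ V] [DecidableEq V]
    {Δ : Set V} (hind : LinearIndependent ℝ (fun x : Δ => (x : V)))
    {m₁ m₂ : Multiset V} (h₁ : ∀ v ∈ m₁, v ∈ Δ) (h₂ : ∀ v ∈ m₂, v ∈ Δ)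
    (hsum : m₁.sum = m₂.sum) : ∀ v, m₁.count v = m₂.count v := by
  set f : Multiset V → (V →₀ ℝ) :=
    fun m => Finsupp.mapRange (Nat.cast) (Nat.cast_zero) m.toFinsupp with hf
  have hsupp : ∀ m : Multiset V, (f m).support = m.toFinset := by
    intro m
    rw [hf]
    simp only
    rw [Finsupp.support_mapRange_of_injective Nat.cast_zero _ Nat.cast_injective,
      Multiset.toFinsupp_support]
  have hval : ∀ m v, f m v = (m.count v : ℝ) := by
    intro m v
    simp [hf, Multiset.toFinsupp_apply]
  have hcomb : ∀ m : Multiset V, Finsupp.linearCombination ℝ (id : V → V) (f m) = m.sum := by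
    intro m
    rw [Finsupp.linearCombination_apply, Finsupp.sum, hsupp]
    have : ∀ v ∈ m.toFinset, (f m v) • (id v : V) = m.count v • v := by
      intro v _
      rw [hval, id, Nat.cast_smul_eq_nsmul]
    rw [Finset.sum_congr rfl this]
    exact (Finset.sum_multiset_count m).symm
  have hl : f m₁ - f m₂ ∈ Finsupp.supported ℝ ℝ Δ := by
    rw [Finsupp.mem_supported]
    intro v hv
    have := Finsupp.support_sub hv
    rcases Finset.mem_union.mp this with h | h
    · exact h₁ v (Multiset.mem_toFinset.mp ((hsupp m₁) ▸ h))
    · exact h₂ v (Multiset.mem_toFinset.mp ((hsupp m₂) ▸ h))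
  have hz : Finsupp.linearCombination ℝ (id : V → V) (f m₁ - f m₂) = 0 := by
    rw [map_sub, hcomb, hcomb, hsum, sub_self]
  have : f m₁ - f m₂ = 0 :=
    (linearIndepOn_iff (v := (id : V → V)) (s := Δ)).mp hind _ hl hz
  have heq : f m₁ = f m₂ := sub_eq_zero.mp this
  intro v
  have hv : f m₁ v = f m₂ v := by rw [heq]
  rw [hval, hval] at hv
  exact_mod_cast hv

/-- Let `X ⊆ λ − ℤ₊Δ` satisfy (i) `λ − α ∈ X` for all `α ∈ Δ`, and
(ii) every `μ ∈ X` is connected to `λ` by a chain in `X` whose consecutive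
differences lie in `Δ`. If `Y ⊆ X` contains `λ` and is `({2},{1,2})`-closed in `X`,
then `Y = X ∩ (λ − ℤ₊Δ')` where `Δ' = {α ∈ Δ : λ − α ∈ Y}`. -/
theorem statement14 {V : Type*} [AddCommGroup V] [Module ℝ V]
    (Δ : Set V) (hfin : Δ.Finite)
    (hind : LinearIndependent ℝ (fun x : Δ => (x : V)))
    (lam : V) (X : Set V)
    (hX : X ⊆ {x : V | ∃ q ∈ AddSubmonoid.closure Δ, x = lam - q})
    (h1 : ∀ α ∈ Δ, lam - α ∈ X)
    (h2 : ∀ μ ∈ X, ∃ (N : ℕ) (c : Fin (N + 1) → V),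
      c 0 = lam ∧ c (Fin.last N) = μ ∧ (∀ j, c j ∈ X) ∧
      ∀ j : Fin N, c j.castSucc - c j.succ ∈ Δ)
    (Y : Set V) (hYX : Y ⊆ X) (hlamY : lam ∈ Y)
    (hcl : ∀ y₁ ∈ Y, ∀ y₂ ∈ Y, ∀ x₁ ∈ X, ∀ x₂ ∈ X,
      y₁ + y₂ = x₁ + x₂ → x₁ ∈ Y ∧ x₂ ∈ Y) :
    Y = X ∩ {x : V | ∃ q ∈ AddSubmonoid.closure {α ∈ Δ | lam - α ∈ Y}, x = lam - q} := by
  classical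
  apply Set.Subset.antisymm
  · -- Y ⊆ X ∩ (lam - ℤ₊Δ')
    intro y hy
    obtain ⟨N, c, hc0, hclast, hcX, hstep⟩ := h2 y (hYX hy)
    have claim : ∀ k, k ≤ N → c ⟨N - k, by omega⟩ ∈ Y := by
      intro k
      induction k with
      | zero =>
        intro _
        have hidx : (⟨N - 0, by omega⟩ : Fin (N + 1)) = Fin.last N := by
          apply Fin.ext; simp [Fin.last]
        rw [hidx, hclast]; exact hy
      | succ k ih =>
        intro hk
        have hY : c ⟨N - k, by omega⟩ ∈ Y := ih (by omega)
        set j : Fin N := ⟨N - (k + 1), by omega⟩ with hj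
        have hsuccj : j.succ = (⟨N - k, by omega⟩ : Fin (N + 1)) := by
          apply Fin.ext; simp [hj]; omega
        rw [← hsuccj] at hY
        have heq : c j.succ + lam = c j.castSucc + (lam - (c j.castSucc - c j.succ)) := by
          abel
        have h := hcl _ hY lam hlamY (c j.castSucc) (hcX _)
          (lam - (c j.castSucc - c j.succ)) (h1 _ (hstep j)) heq
        have hidx : j.castSucc = (⟨N - (k + 1), by omega⟩ : Fin (N + 1)) := by
          apply Fin.ext; simp [hj]
        rw [← hidx]; exact h.1
    have claim2 : ∀ j : Fin N, (c j.castSucc - c j.succ) ∈ {α ∈ Δ | lam - α ∈ Y} := by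
      intro j
      have hj1 : (j : ℕ) + 1 ≤ N := j.isLt
      have hY : c ⟨N - (N - ((j : ℕ) + 1)), by omega⟩ ∈ Y := claim (N - ((j : ℕ) + 1)) (by omega)
      have hidx : (⟨N - (N - ((j : ℕ) + 1)), by omega⟩ : Fin (N + 1)) = j.succ := by
        apply Fin.ext; simp; omega
      rw [hidx] at hY
      have heq : c j.succ + lam = c j.castSucc + (lam - (c j.castSucc - c j.succ)) := by
        abel
      have h := hcl _ hY lam hlamY (c j.castSucc) (hcX _)
        (lam - (c j.castSucc - c j.succ)) (h1 _ (hstep j)) heq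
      exact ⟨hstep j, h.2⟩
    refine ⟨hYX hy, ∑ j : Fin N, (c j.castSucc - c j.succ), ?_, ?_⟩
    · exact AddSubmonoid.sum_mem _ (fun j _ => AddSubmonoid.subset_closure (claim2 j))
    · rw [telescope N c, hc0, hclast]
      exact (sub_sub_cancel lam y).symm
  · -- X ∩ (lam - ℤ₊Δ') ⊆ Y
    rintro x ⟨hxX, q, hq, hxq⟩
    obtain ⟨N, c, hc0, hclast, hcX, hstep⟩ := h2 x hxX
    have htel : ∑ j : Fin N, (c j.castSucc - c j.succ) = q := by
      rw [telescope N c, hc0, hclast, hxq]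
      exact sub_sub_cancel lam q
    obtain ⟨m₂, hm₂, hm₂sum⟩ := AddSubmonoid.exists_multiset_of_mem_closure hq
    set m₁ : Multiset V := Finset.univ.val.map (fun j : Fin N => c j.castSucc - c j.succ)
      with hm₁
    have hm₁sum : m₁.sum = q := htel
    have hm₁Δ : ∀ v ∈ m₁, v ∈ Δ := by
      intro v hv
      obtain ⟨j, _, rfl⟩ := Multiset.mem_map.mp hv
      exact hstep j
    have hm₂Δ : ∀ v ∈ m₂, v ∈ Δ := fun v hv => (hm₂ v hv).1
    have hcount := counts_eq hind hm₁Δ hm₂Δ (by rw [hm₁sum, hm₂sum])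
    have hstepY : ∀ j : Fin N, lam - (c j.castSucc - c j.succ) ∈ Y := by
      intro j
      have hmem : (c j.castSucc - c j.succ) ∈ m₁ :=
        Multiset.mem_map.mpr ⟨j, Finset.mem_univ j, rfl⟩
      have hpos : 0 < m₂.count (c j.castSucc - c j.succ) := by
        rw [← hcount]; exact Multiset.count_pos.mpr hmem
      exact (hm₂ _ (Multiset.count_pos.mp hpos)).2
    have up : ∀ k (_ : k ≤ N), c ⟨k, by omega⟩ ∈ Y := by
      intro k
      induction k with
      | zero =>
        intro _
        have hidx : (⟨0, by omega⟩ : Fin (N + 1)) = 0 := rfl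
        rw [hidx, hc0]; exact hlamY
      | succ k ih =>
        intro hk
        set j : Fin N := ⟨k, by omega⟩ with hj
        have hY1 : c j.castSucc ∈ Y := by
          have := ih (by omega)
          have hidx : (⟨k, by omega⟩ : Fin (N + 1)) = j.castSucc := by
            apply Fin.ext; simp [hj]
          rwa [hidx] at this
        have heq : c j.castSucc + (lam - (c j.castSucc - c j.succ)) = c j.succ + lam := by
          abel
        have h := hcl _ hY1 _ (hstepY j) (c j.succ) (hcX _) lam (hYX hlamY) heq
        have hidx : (⟨k + 1, by omega⟩ : Fin (N + 1)) = j.succ := by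
          apply Fin.ext; simp [hj]
        rw [hidx]; exact h.1
    have hfinal := up N le_rfl
    have hidx : (⟨N, by omega⟩ : Fin (N + 1)) = Fin.last N := rfl
    rw [hidx, hclast] at hfinal
    exact hfinal
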